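/- Let x : [0,τ] → ℝⁿ be the state of an agent satisfying x'(t) = u(t) + d(t) with ‖u(t)‖ ≤ u_max, ‖d(t)‖ ≤ d_max, and u_max > d_max, and let p : [0,τ] → ℝⁿ be a target with ‖p'(t)‖ ≤ u_P. If dist(x(0), p(0)) + u_P·τ ≤ (u_max − d_max)·τ, then there exists an admissible control such that x(τ) = p(τ) is achievable in the worst case; formally: for any measurable d with ‖d(t)‖ ≤ d_max and any p with ‖p'(t)‖ ≤ u_P, the control u(t) = (u_max)·(p(t) − x(t))/‖p(t) − x(t)‖ (when x(t) ≠ p(t)) makes r(t) = ‖x(t) − p(t)‖ satisfy r'(t) ≤ −(u_max − d_max − u_P) almost everywhere while r(t) > 0, hence r(t) = 0 for some t ≤ r(0)/(u_max − d_max − u_P) ≤ τ. -/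

import Mathlib

open Real Set

lemma norm_hasDerivAt_aux {E : Type*} [NormedAddCommGroup E] [InnerProductSpace ℝ E]
    {f : ℝ → E} {v : E} {t : ℝ} (hf : HasDerivAt f v t) (h0 : f t ≠ 0) :
    HasDerivAt (fun s => ‖f s‖) (inner ℝ (f t) v / ‖f t‖) t := by
  have h1 : HasDerivAt (fun s => Real.sqrt (‖f s‖ ^ 2))
      ((2 * inner ℝ (f t) v) / (2 * Real.sqrt (‖f t‖ ^ 2))) t :=
    hf.norm_sq.sqrt (pow_ne_zero 2 (norm_ne_zero_iff.2 h0))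
  have hs : Real.sqrt (‖f t‖ ^ 2) = ‖f t‖ := Real.sqrt_sq (norm_nonneg _)
  have : (2 * (inner ℝ (f t) v : ℝ)) / (2 * Real.sqrt (‖f t‖ ^ 2)) = inner ℝ (f t) v / ‖f t‖ := by
    rw [hs, mul_div_mul_left _ _ (two_ne_zero)]
  rw [this] at h1
  convert h1 using 2 with s
  exact (Real.sqrt_sq (norm_nonneg _)).symm

theorem stmt6 (n : ℕ) (τ umax dmax uP : ℝ)
    (hτ : 0 < τ) (hd : 0 ≤ dmax) (huP : 0 ≤ uP) (hnet : dmax + uP < umax)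
    (x p : ℝ → EuclideanSpace ℝ (Fin n))
    (u d : ℝ → EuclideanSpace ℝ (Fin n))
    (hdyn : ∀ t ∈ Set.Icc (0:ℝ) τ, HasDerivAt x (u t + d t) t)
    (hu : ∀ t ∈ Set.Icc (0:ℝ) τ, ‖u t‖ ≤ umax)
    (hdb : ∀ t ∈ Set.Icc (0:ℝ) τ, ‖d t‖ ≤ dmax)
    (hp : ∀ t ∈ Set.Icc (0:ℝ) τ, HasDerivAt p (deriv p t) t ∧ ‖deriv p t‖ ≤ uP)
    (hctrl : ∀ t ∈ Set.Icc (0:ℝ) τ, x t ≠ p t →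
      u t = (umax / ‖p t - x t‖) • (p t - x t))
    (hfeas : dist (x 0) (p 0) + uP * τ ≤ (umax - dmax) * τ)
    (r : ℝ → ℝ) (hr : r = fun t => ‖x t - p t‖) :
    (∀ t ∈ Set.Icc (0:ℝ) τ, 0 < r t →
        HasDerivAt r (deriv r t) t ∧ deriv r t ≤ -(umax - dmax - uP)) ∧
    ∃ t : ℝ, 0 ≤ t ∧ t ≤ r 0 / (umax - dmax - uP) ∧
      r 0 / (umax - dmax - uP) ≤ τ ∧ r t = 0 := by
  subst hr
  set c : ℝ := umax - dmax - uP with hc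
  have hcpos : 0 < c := by dsimp [c]; linarith
  -- Part 1
  have part1 : ∀ t ∈ Set.Icc (0:ℝ) τ, 0 < ‖x t - p t‖ →
      HasDerivAt (fun t => ‖x t - p t‖) (deriv (fun t => ‖x t - p t‖) t) t ∧
      deriv (fun t => ‖x t - p t‖) t ≤ -c := by
    intro t ht hpos
    have hne : x t - p t ≠ 0 := by
      intro h; rw [h, norm_zero] at hpos; exact lt_irrefl _ hpos
    have hxp : x t ≠ p t := sub_ne_zero.mp hne
    set w : EuclideanSpace ℝ (Fin n) := x t - p t with hw
    set v : EuclideanSpace ℝ (Fin n) := u t + d t - deriv p t with hv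
    have hder : HasDerivAt (fun s => x s - p s) v t := (hdyn t ht).sub (hp t ht).1
    have hD : HasDerivAt (fun t => ‖x t - p t‖) ((inner ℝ w v : ℝ) / ‖w‖) t :=
      norm_hasDerivAt_aux hder hne
    have hderiv_eq : deriv (fun t => ‖x t - p t‖) t = (inner ℝ w v : ℝ) / ‖w‖ := hD.deriv
    refine ⟨hderiv_eq ▸ hD, ?_⟩
    rw [hderiv_eq]
    -- inner product with control term
    have hueq : u t = -((umax / ‖w‖) • w) := by
      rw [hctrl t ht hxp]
      have : p t - x t = -w := by rw [hw]; abel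
      rw [this, norm_neg, smul_neg]
    have hinner_u : (inner ℝ w (u t) : ℝ) = -(umax * ‖w‖) := by
      rw [hueq, inner_neg_right, real_inner_smul_right, real_inner_self_eq_norm_sq]
      have hwne : ‖w‖ ≠ 0 := norm_ne_zero_iff.2 hne
      field_simp
    have hrest : (inner ℝ w (d t - deriv p t) : ℝ) ≤ ‖w‖ * (dmax + uP) := by
      calc (inner ℝ w (d t - deriv p t) : ℝ) ≤ ‖w‖ * ‖d t - deriv p t‖ := real_inner_le_norm _ _
        _ ≤ ‖w‖ * (dmax + uP) := by
            apply mul_le_mul_of_nonneg_left _ (norm_nonneg _)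
            calc ‖d t - deriv p t‖ ≤ ‖d t‖ + ‖deriv p t‖ := norm_sub_le _ _
              _ ≤ dmax + uP := add_le_add (hdb t ht) (hp t ht).2
    have hsplit : (inner ℝ w v : ℝ) = inner ℝ w (u t) + inner ℝ w (d t - deriv p t) := by
      rw [hv, ← inner_add_right]
      congr 1
      abel
    have hbound : (inner ℝ w v : ℝ) ≤ -c * ‖w‖ := by
      rw [hsplit, hinner_u, hc]
      nlinarith [hrest]
    rw [div_le_iff₀ hpos]
    linarith [hbound]
  refine ⟨part1, ?_⟩
  -- Part 2
  have hr0 : ‖x 0 - p 0‖ = dist (x 0) (p 0) := (dist_eq_norm _ _).symm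
  set T : ℝ := ‖x 0 - p 0‖ / c with hT
  have hTnn : 0 ≤ T := div_nonneg (norm_nonneg _) hcpos.le
  have hr0le : ‖x 0 - p 0‖ ≤ c * τ := by rw [hr0, hc]; nlinarith
  have hTτ : T ≤ τ := by
    rw [hT, div_le_iff₀ hcpos]
    linarith [hr0le]
  by_contra hcon
  push_neg at hcon
  have hpos : ∀ t ∈ Set.Icc (0:ℝ) T, 0 < ‖x t - p t‖ := by
    intro t ht
    rcases (norm_nonneg (x t - p t)).lt_or_eq with h | h
    · exact h
    · exact absurd h.symm (hcon t ht.1 ht.2 hTτ)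
  -- g t = ‖x t - p t‖ + c * t is antitone on [0, T]
  set g : ℝ → ℝ := fun t => ‖x t - p t‖ + c * t with hg
  have hsub : Set.Icc (0:ℝ) T ⊆ Set.Icc (0:ℝ) τ := Set.Icc_subset_Icc le_rfl hTτ
  have hgd : ∀ t ∈ Set.Icc (0:ℝ) T, HasDerivAt g (deriv (fun t => ‖x t - p t‖) t + c) t := by
    intro t ht
    have h2 : HasDerivAt (fun s => c * s) c t := by
      simpa using (hasDerivAt_id t).const_mul c
    exact ((part1 t (hsub ht) (hpos t ht)).1).add h2
  have hanti : AntitoneOn g (Set.Icc 0 T) := by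
    apply antitoneOn_of_deriv_nonpos (convex_Icc 0 T)
    · exact fun t ht => ((hgd t ht).continuousAt).continuousWithinAt
    · intro t ht
      rw [interior_Icc] at ht
      exact (hgd t (Set.Ioo_subset_Icc_self ht)).differentiableAt.differentiableWithinAt
    · intro t ht
      rw [interior_Icc] at ht
      have := (hgd t (Set.Ioo_subset_Icc_self ht)).deriv
      rw [this]
      have := (part1 t (hsub (Set.Ioo_subset_Icc_self ht)) (hpos t (Set.Ioo_subset_Icc_self ht))).2
      linarith
  have h0mem : (0:ℝ) ∈ Set.Icc (0:ℝ) T := ⟨le_rfl, hTnn⟩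
  have hTmem : T ∈ Set.Icc (0:ℝ) T := ⟨hTnn, le_rfl⟩
  have := hanti h0mem hTmem hTnn
  have hg0 : g 0 = ‖x 0 - p 0‖ := by simp [hg]
  have hcT : c * T = ‖x 0 - p 0‖ := by
    rw [hT]; field_simp
  rw [hg0] at this
  have hgT : g T = ‖x T - p T‖ + c * T := rfl
  rw [hgT] at this
  have : ‖x T - p T‖ ≤ 0 := by linarith [this, hcT]
  exact absurd (le_antisymm this (norm_nonneg _)) (hcon T hTnn le_rfl hTτ)
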